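/- arXiv:2103.05096 — 2 statements merged into one kernel-verified Lean document; each statement's English description precedes it below -/
import Mathlib

section
/- Consider the quadratic function R̃(M) = (1/2)·E[|σ(B_M)ᵀ y − ((β̄-β)/2)·σσᵀ y|²_{(σσᵀ)^{-1}}] where B_M = ((β̄-β)/2)σ + σM ranges over skew-symmetric M, the expectation is with respect to a probability measure with finite positive-definite second moment of y, and |z|²_G = zᵀGz. Then R̃(M) ≥ 0 with equality if and only if M = 0, i.e., the unique minimizer of the asymptotic entropy production rate over admissible feedback matrices is B* = ((β̄-β)/2)σ. -/
open Matrix MeasureTheory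
open scoped MatrixOrder

lemma sq_sandwich {n : ℕ} (A C : Matrix (Fin n) (Fin n) ℝ) (hC : Cᵀ = C) :
    A * (C * C) * Aᵀ = (A * C) * (A * C)ᵀ := by
  rw [Matrix.transpose_mul, hC]; noncomm_ring

lemma dot_helper {n : ℕ} (A : Matrix (Fin n) (Fin n) ℝ) (x u : Fin n → ℝ) :
    A.mulVec x ⬝ᵥ u = x ⬝ᵥ Aᵀ.mulVec u := by
  rw [dotProduct_comm, dotProduct_mulVec, ← mulVec_transpose, dotProduct_comm]

/-- The asymptotic entropy production rate
`R̃(M) = (1/2) E[|σ (B_M)ᵀ y − ((β̄-β)/2) σσᵀ y|²_{(σσᵀ)⁻¹}]`, where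
`B_M = ((β̄-β)/2)σ + σM` with `M` skew-symmetric and the expectation is over a
probability measure with positive definite second moment, is nonnegative and
vanishes iff `M = 0`; i.e. the unique minimiser is `B* = ((β̄-β)/2)σ`. -/
theorem stmt_5 {n : ℕ} (σ : Matrix (Fin n) (Fin n) ℝ) (hσ : IsUnit σ.det)
    (βbar β : ℝ) (hβbar : 0 < βbar) (hβ : 0 < β)
    (μ : Measure (Fin n → ℝ)) [IsProbabilityMeasure μ]
    (hmom : Integrable (fun y : Fin n → ℝ => ‖y‖ ^ 2) μ)
    (hSigma : (Matrix.of fun i j : Fin n => ∫ y : Fin n → ℝ, y i * y j ∂μ).PosDef)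
    (M : Matrix (Fin n) (Fin n) ℝ) (hM : Mᵀ = -M)
    (B : Matrix (Fin n) (Fin n) ℝ) (hB : B = ((βbar - β) / 2) • σ + σ * M)
    (z : (Fin n → ℝ) → (Fin n → ℝ))
    (hz : ∀ y, z y = σ.mulVec (Bᵀ.mulVec y) - ((βbar - β) / 2) • (σ * σᵀ).mulVec y)
    (R : ℝ) (hR : R = (1 / 2) * ∫ y, z y ⬝ᵥ (σ * σᵀ)⁻¹.mulVec (z y) ∂μ) :
    0 ≤ R ∧ (R = 0 ↔ M = 0) := by
  set N := M * σᵀ with hN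
  set Sig := (Matrix.of fun i j : Fin n => ∫ y : Fin n → ℝ, y i * y j ∂μ) with hSig
  have hσT : IsUnit σᵀ.det := by rwa [Matrix.det_transpose]
  -- Step 1: the integrand equals `(N y) ⬝ᵥ (N y)`
  have hBT : Bᵀ = ((βbar - β) / 2) • σᵀ - M * σᵀ := by
    rw [hB]; simp [Matrix.transpose_add, Matrix.transpose_smul, Matrix.transpose_mul, hM,
      neg_mul, sub_eq_add_neg]
  have hz' : ∀ y, z y = -((σ * N).mulVec y) := by
    intro y
    rw [hz, hBT]
    rw [Matrix.sub_mulVec, Matrix.mulVec_sub, Matrix.smul_mulVec, Matrix.mulVec_smul,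
      Matrix.mulVec_mulVec]
    simp only [Matrix.mulVec_mulVec]
    abel
  have key : ∀ y, z y ⬝ᵥ (σ * σᵀ)⁻¹.mulVec (z y) = (N.mulVec y) ⬝ᵥ (N.mulVec y) := by
    intro y
    rw [hz']
    have hinv : (σ * σᵀ)⁻¹ = σᵀ⁻¹ * σ⁻¹ := Matrix.mul_inv_rev σ σᵀ
    rw [Matrix.mulVec_neg, dotProduct_neg, neg_dotProduct, neg_neg, hinv,
      Matrix.mulVec_mulVec, dot_helper, Matrix.mulVec_mulVec]
    have e1 : (σ * N)ᵀ * (σᵀ⁻¹ * σ⁻¹ * (σ * N)) = Nᵀ * N := by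
      rw [mul_assoc σᵀ⁻¹, ← mul_assoc σ⁻¹, Matrix.nonsing_inv_mul σ hσ, one_mul,
        Matrix.transpose_mul, mul_assoc, ← mul_assoc σᵀ, Matrix.mul_nonsing_inv σᵀ hσT, one_mul]
    rw [e1, ← Matrix.mulVec_mulVec, ← dot_helper]
  -- Step 2: integrability of second moments
  have hij : ∀ i j, Integrable (fun y : Fin n → ℝ => y i * y j) μ := by
    intro i j
    refine hmom.mono'
      (((measurable_pi_apply i).mul (measurable_pi_apply j)).aestronglyMeasurable) ?_
    filter_upwards with y
    have h1 : |y i| ≤ ‖y‖ := norm_le_pi_norm y i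
    have h2 : |y j| ≤ ‖y‖ := norm_le_pi_norm y j
    calc ‖y i * y j‖ = |y i| * |y j| := by rw [Real.norm_eq_abs, abs_mul]
      _ ≤ ‖y‖ * ‖y‖ := mul_le_mul h1 h2 (abs_nonneg _) (norm_nonneg _)
      _ = ‖y‖ ^ 2 := (sq ‖y‖).symm
  -- Step 3: compute the integral
  have hf : ∀ y : Fin n → ℝ,
      (N.mulVec y) ⬝ᵥ (N.mulVec y) = ∑ k, ∑ i, ∑ j, N k i * N k j * (y i * y j) := by
    intro y
    simp only [dotProduct, Matrix.mulVec, Finset.sum_mul_sum]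
    exact Finset.sum_congr rfl fun k _ =>
      Finset.sum_congr rfl fun i _ => Finset.sum_congr rfl fun j _ => by ring
  have hint : (∫ y, (N.mulVec y) ⬝ᵥ (N.mulVec y) ∂μ)
      = ∑ k, ∑ i, ∑ j, N k i * N k j * Sig i j := by
    simp_rw [hf]
    rw [integral_finset_sum _ (fun k _ => integrable_finset_sum _ fun i _ =>
      integrable_finset_sum _ fun j _ => (hij i j).const_mul _)]
    refine Finset.sum_congr rfl fun k _ => ?_
    rw [integral_finset_sum _ (fun i _ => integrable_finset_sum _ fun j _ =>
      (hij i j).const_mul _)]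
    refine Finset.sum_congr rfl fun i _ => ?_
    rw [integral_finset_sum _ (fun j _ => (hij i j).const_mul _)]
    refine Finset.sum_congr rfl fun j _ => ?_
    rw [integral_const_mul]
    rfl
  -- Step 4: rewrite as a sum of squares using the square root of Sig
  set S := CFC.sqrt Sig with hS
  have hS2 : S * S = Sig := CFC.sqrt_mul_sqrt_self Sig hSigma.posSemidef.nonneg
  have hSsymm : Sᵀ = S := by
    have h : Sᴴ = S := (CFC.sqrt_nonneg Sig).posSemidef.1
    rwa [Matrix.conjTranspose_eq_transpose_of_trivial] at h
  have hSigSymm : ∀ i j, Sig i j = Sig j i := by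
    intro i j
    show (∫ y : Fin n → ℝ, y i * y j ∂μ) = ∫ y : Fin n → ℝ, y j * y i ∂μ
    have : (fun y : Fin n → ℝ => y i * y j) = fun y => y j * y i :=
      funext fun y => mul_comm _ _
    rw [this]
  set T := N * S with hT
  have htrace : ∑ k, ∑ i, ∑ j, N k i * N k j * Sig i j = ∑ k, ∑ l, T k l * T k l := by
    have e2 : (N * Sig * Nᵀ) = T * Tᵀ := by
      rw [← hS2]; exact sq_sandwich N S hSsymm
    have lhs_eq : ∑ k, ∑ i, ∑ j, N k i * N k j * Sig i j = (N * Sig * Nᵀ).trace := by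
      simp only [Matrix.trace, Matrix.diag, Matrix.mul_apply, Matrix.transpose_apply,
        Finset.sum_mul]
      refine Finset.sum_congr rfl fun k _ => ?_
      refine Finset.sum_congr rfl fun i _ => ?_
      exact Finset.sum_congr rfl fun j _ => by rw [hSigSymm i j]; ring
    have rhs_eq : (T * Tᵀ).trace = ∑ k, ∑ l, T k l * T k l := by
      simp only [Matrix.trace, Matrix.diag, Matrix.mul_apply, Matrix.transpose_apply]
    rw [lhs_eq, e2, rhs_eq]
  have hRval : R = (1 / 2) * ∑ k, ∑ l, T k l * T k l := by
    rw [hR]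
    congr 1
    rw [show (fun y => z y ⬝ᵥ (σ * σᵀ)⁻¹.mulVec (z y)) = fun y =>
      (N.mulVec y) ⬝ᵥ (N.mulVec y) from funext key] at *
    rw [hint, htrace]
  -- Step 5: conclude
  have hXnn : 0 ≤ ∑ k, ∑ l, T k l * T k l :=
    Finset.sum_nonneg fun k _ => Finset.sum_nonneg fun l _ => mul_self_nonneg _
  constructor
  · rw [hRval]; positivity
  constructor
  · intro hR0
    -- sum of squares is zero, hence T = 0
    have hX0 : ∑ k, ∑ l, T k l * T k l = 0 := by rw [hRval] at hR0; linarith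
    have hT0 : T = 0 := by
      ext k l
      have h1 := (Finset.sum_eq_zero_iff_of_nonneg
        (fun k _ => Finset.sum_nonneg fun l _ => mul_self_nonneg (T k l))).mp hX0 k
        (Finset.mem_univ k)
      have h2 := (Finset.sum_eq_zero_iff_of_nonneg
        (fun l _ => mul_self_nonneg (T k l))).mp h1 l (Finset.mem_univ l)
      simpa [mul_self_eq_zero] using h2
    -- S is invertible
    have hSdet : IsUnit S.det := by
      have hdet : S.det * S.det = Sig.det := by rw [← Matrix.det_mul, hS2]
      have hpos : 0 < Sig.det := hSigma.det_pos
      refine isUnit_iff_ne_zero.mpr fun h0 => ?_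
      rw [h0, mul_zero] at hdet
      linarith
    have hN0 : N = 0 := by
      have : T * S⁻¹ = 0 := by rw [hT0, zero_mul]
      rwa [hT, mul_assoc, Matrix.mul_nonsing_inv S hSdet, mul_one] at this
    have : N * (σᵀ)⁻¹ = 0 := by rw [hN0, zero_mul]
    rwa [hN, mul_assoc, Matrix.mul_nonsing_inv σᵀ hσT, mul_one] at this
  · intro hM0
    have hT0 : T = 0 := by rw [hT, hN, hM0, zero_mul, zero_mul]
    rw [hRval, hT0]
    simp
end

section
/- Let γ ∈ ℝ^{n×n} be symmetric positive definite and ε > 0. The solution of the rescaled Langevin system dX_t = (1/ε)Y_t dt, dY_t = −(1/ε²)γY_t dt − (1/ε)∇V(X_t) dt + (1/√ε)σ dW_t with X_0 = x, Y_0 = y admits the integral representation X_t = x + εγ^{-1}(I_n − e^{−tγ/ε²})y − ∫₀^t γ^{-1}(I_n − e^{−(t−r)γ/ε²})∇V(X_r) dr + √ε ∫₀^t γ^{-1}(I_n − e^{−(t−r)γ/ε²})σ dW_r. -/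
open Matrix MeasureTheory intervalIntegral

attribute [local instance] Matrix.linftyOpNormedAddCommGroup Matrix.linftyOpNormedRing
  Matrix.linftyOpNormedAlgebra

namespace Stmt15
variable {n : ℕ}

noncomputable def mvB : Matrix (Fin n) (Fin n) ℝ →L[ℝ] (Fin n → ℝ) →L[ℝ] (Fin n → ℝ) :=
  LinearMap.toContinuousLinearMap
  { toFun := fun M => LinearMap.toContinuousLinearMap M.mulVecLin
    map_add' := fun M N => by ext v i; simp [Matrix.add_mulVec]
    map_smul' := fun c M => by ext v i; simp [Matrix.smul_mulVec] }

@[simp] lemma mvB_apply (M : Matrix (Fin n) (Fin n) ℝ) (v : Fin n → ℝ) :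
    mvB M v = M.mulVec v := rfl

lemma hasDerivAt_mulVec {M : ℝ → Matrix (Fin n) (Fin n) ℝ} {v : ℝ → Fin n → ℝ}
    {M' : Matrix (Fin n) (Fin n) ℝ} {v' : Fin n → ℝ} {t : ℝ}
    (hM : HasDerivAt M M' t) (hv : HasDerivAt v v' t) :
    HasDerivAt (fun s => (M s).mulVec (v s)) (M'.mulVec (v t) + (M t).mulVec v') t := by
  have h1 : HasDerivAt (fun s => mvB (M s)) (mvB M') t :=
    mvB.hasFDerivAt.comp_hasDerivAt t hM
  simpa using h1.clm_apply hv

lemma hasDerivAt_primitive {f : ℝ → Fin n → ℝ} (hf : Continuous f) (t : ℝ) :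
    HasDerivAt (fun u => ∫ s in (0:ℝ)..u, f s) (f t) t :=
  intervalIntegral.integral_hasDerivAt_right (hf.intervalIntegrable _ _)
    (hf.stronglyMeasurableAtFilter _ _) hf.continuousAt

lemma hasDerivAt_E (A : Matrix (Fin n) (Fin n) ℝ) (s : ℝ) :
    HasDerivAt (fun u : ℝ => NormedSpace.exp (-(u • A)))
      (-(A * NormedSpace.exp (-(s • A)))) s := by
  have h := hasDerivAt_exp_smul_const' (𝕂 := ℝ) (-A) s
  simp only [smul_neg, neg_mul] at h
  exact h

lemma continuous_E (A : Matrix (Fin n) (Fin n) ℝ) :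
    Continuous (fun u : ℝ => NormedSpace.exp (-(u • A))) :=
  NormedSpace.exp_continuous.comp ((continuous_id.smul continuous_const).neg)

lemma E_mul_E (A : Matrix (Fin n) (Fin n) ℝ) (s u : ℝ) :
    NormedSpace.exp (-(s • A)) * NormedSpace.exp (-(u • A))
      = NormedSpace.exp (-((s + u) • A)) := by
  rw [← Matrix.exp_add_of_commute]
  · congr 1
    rw [add_smul]; abel
  · exact (((Commute.refl A).smul_left s).smul_right u).neg_left.neg_right

lemma commute_A_E (A : Matrix (Fin n) (Fin n) ℝ) (s : ℝ) :
    Commute A (NormedSpace.exp (-(s • A))) :=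
  (((Commute.refl A).smul_right s).neg_right).exp_right

end Stmt15

open Stmt15

set_option maxHeartbeats 1000000

/-- Pathwise integral representation of the rescaled Langevin
dynamics. If `(X, Y)` solves (pathwise, in integrated form, with noise path
`W`, `W 0 = 0`, the stochastic integral `∫₀ᵗ σ dW = σ W_t` for the constant
integrand) the system
`X_t = x + (1/ε)∫₀ᵗ Y_s ds`,
`Y_t = y − (1/ε²)∫₀ᵗ γY_s ds − (1/ε)∫₀ᵗ ∇V(X_s) ds + (1/√ε) σ W_t`,
then `X` admits the representation
`X_t = x + εγ⁻¹(I − e^{−tγ/ε²})y − ∫₀ᵗ γ⁻¹(I − e^{−(t−r)γ/ε²})∇V(X_r) dr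
      + √ε ∫₀ᵗ γ⁻¹(I − e^{−(t−r)γ/ε²})σ dW_r`,
where the stochastic convolution is expressed pathwise (via integration by
parts, since `W 0 = 0` and the integrand vanishes at `r = t`) as
`∫₀ᵗ γ⁻¹(I − e^{−(t−r)γ/ε²})σ dW_r = ∫₀ᵗ (1/ε²) e^{−(t−r)γ/ε²} σ W_r dr`. -/
theorem stmt_15 {n : ℕ} (γ σm : Matrix (Fin n) (Fin n) ℝ) (hγ : γ.PosDef)
    (ε : ℝ) (hε : 0 < ε)
    (gradV : (Fin n → ℝ) → (Fin n → ℝ)) (L : NNReal) (hLip : LipschitzWith L gradV)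
    (X Y W : ℝ → Fin n → ℝ)
    (hXc : Continuous X) (hYc : Continuous Y) (hWc : Continuous W) (hW0 : W 0 = 0)
    (x y : Fin n → ℝ)
    (hX : ∀ t : ℝ, X t = x + (1 / ε) • ∫ s in (0:ℝ)..t, Y s)
    (hY : ∀ t : ℝ, Y t = y - (1 / ε ^ 2) • (∫ s in (0:ℝ)..t, γ.mulVec (Y s))
        - (1 / ε) • (∫ s in (0:ℝ)..t, gradV (X s))
        + (1 / Real.sqrt ε) • σm.mulVec (W t)) :
    ∀ t : ℝ, 0 ≤ t →
      X t = x + ε • (γ⁻¹ * (1 - NormedSpace.exp (-((t / ε ^ 2) • γ)))).mulVec y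
        - (∫ r in (0:ℝ)..t,
            (γ⁻¹ * (1 - NormedSpace.exp (-(((t - r) / ε ^ 2) • γ)))).mulVec (gradV (X r)))
        + Real.sqrt ε • ∫ r in (0:ℝ)..t,
            (1 / ε ^ 2) • (NormedSpace.exp (-(((t - r) / ε ^ 2) • γ)) * σm).mulVec (W r) := by
  intro t ht
  have hεn : ε ≠ 0 := ne_of_gt hε
  have hε2 : (ε ^ 2) ≠ 0 := pow_ne_zero 2 hεn
  have hss : Real.sqrt ε * Real.sqrt ε = ε := Real.mul_self_sqrt hε.le
  have hsq : Real.sqrt ε ≠ 0 := by positivity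
  have hdet : IsUnit γ.det := hγ.det_pos.ne'.isUnit
  have hγinv : γ⁻¹ * γ = 1 := Matrix.nonsing_inv_mul γ hdet
  set A : Matrix (Fin n) (Fin n) ℝ := (ε ^ 2)⁻¹ • γ with hAdef
  have hconv : ∀ s : ℝ, -((s / ε ^ 2) • γ) = -(s • A) := by
    intro s; rw [hAdef, smul_smul, div_eq_mul_inv]
  simp only [hconv]
  set E : ℝ → Matrix (Fin n) (Fin n) ℝ := fun s => NormedSpace.exp (-(s • A)) with hEdef
  have hEmul : ∀ s u : ℝ, E s * E u = E (s + u) := fun s u => E_mul_E A s u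
  have hE0 : E 0 = 1 := by
    simp only [hEdef, zero_smul, neg_zero, NormedSpace.exp_zero]
  have hEd : ∀ s, HasDerivAt E (-(A * E s)) s := hasDerivAt_E A
  have hEc : Continuous E := continuous_E A
  have hcomm : ∀ s, A * E s = E s * A := fun s => commute_A_E A s
  -- vector fields
  have hgc : Continuous fun s => gradV (X s) := hLip.continuous.comp hXc
  set G : ℝ → Fin n → ℝ := fun u => ∫ s in (0:ℝ)..u, gradV (X s) with hGdef
  have hGd : ∀ u, HasDerivAt G (gradV (X u)) u := fun u => hasDerivAt_primitive hgc u
  have hGc : Continuous G := continuous_iff_continuousAt.2 fun u => (hGd u).continuousAt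
  have hG0 : G 0 = 0 := intervalIntegral.integral_same
  set h : ℝ → Fin n → ℝ := fun u => -((1 / ε) • G u) + (1 / Real.sqrt ε) • σm.mulVec (W u)
    with hhdef
  have hσWc : Continuous fun u => σm.mulVec (W u) := continuous_const.matrix_mulVec hWc
  have hhc : Continuous h := by rw [hhdef]; fun_prop
  have hh0 : h 0 = 0 := by
    simp [hhdef, hG0, hW0, Matrix.mulVec_zero]
  have hIYc : Continuous fun s => A.mulVec (Y s) := continuous_const.matrix_mulVec hYc
  set I : ℝ → Fin n → ℝ := fun u => ∫ s in (0:ℝ)..u, A.mulVec (Y s) with hIdef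
  have hId : ∀ u, HasDerivAt I (A.mulVec (Y u)) u := fun u => hasDerivAt_primitive hIYc u
  have hY' : ∀ u : ℝ, Y u = y - I u + h u := by
    intro u
    have hIA : I u = (1 / ε ^ 2) • ∫ s in (0:ℝ)..u, γ.mulVec (Y s) := by
      simp only [hIdef]
      rw [← intervalIntegral.integral_smul]
      refine intervalIntegral.integral_congr fun s _ => ?_
      rw [hAdef, Matrix.smul_mulVec, one_div]
    rw [hY u, hIA]
    simp only [hhdef, hGdef]
    abel
  set K : ℝ → Fin n → ℝ := fun u => ∫ r in (0:ℝ)..u, (E (-r)).mulVec (h r) with hKdef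
  have hKintc : Continuous fun r : ℝ => (E (-r)).mulVec (h r) :=
    (hEc.comp continuous_neg).matrix_mulVec hhc
  have hKd : ∀ u, HasDerivAt K ((E (-u)).mulVec (h u)) u := fun u => hasDerivAt_primitive hKintc u
  have hK0 : K 0 = 0 := intervalIntegral.integral_same
  set D : ℝ → Fin n → ℝ := fun u => y - I u - (E u).mulVec y + (A * E u).mulVec (K u) with hDdef
  have hAE : ∀ u : ℝ, (A * E u) * E (-u) = A := by
    intro u
    rw [mul_assoc, hEmul, add_neg_cancel, hE0, mul_one]
  -- derivative of D
  have hDd : ∀ u, HasDerivAt D (-(A.mulVec (D u))) u := by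
    intro u
    have hEyd : HasDerivAt (fun v => (E v).mulVec y) ((-(A * E u)).mulVec y + (E u).mulVec 0) u :=
      hasDerivAt_mulVec (hEd u) (hasDerivAt_const u y)
    have hAEd : HasDerivAt (fun v => A * E v) (-(A * (A * E u))) u := by
      have h3 := (hEd u).const_mul A
      simp only [mul_neg] at h3
      exact h3
    have hMKd : HasDerivAt (fun v => (A * E v).mulVec (K v))
        ((-(A * (A * E u))).mulVec (K u) + (A * E u).mulVec ((E (-u)).mulVec (h u))) u :=
      hasDerivAt_mulVec hAEd (hKd u)
    have h1 : HasDerivAt D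
        (0 - A.mulVec (Y u) - ((-(A * E u)).mulVec y + (E u).mulVec 0)
          + ((-(A * (A * E u))).mulVec (K u) + (A * E u).mulVec ((E (-u)).mulVec (h u)))) u := by
      rw [hDdef]
      exact (((hasDerivAt_const u y).sub (hId u)).sub hEyd).add hMKd
    convert h1 using 1
    have h2 : (A * E u).mulVec ((E (-u)).mulVec (h u)) = A.mulVec (h u) := by
      rw [Matrix.mulVec_mulVec, hAE]
    rw [h2, hDdef]
    simp only [hY' u]
    simp only [Matrix.mulVec_add, Matrix.mulVec_sub, Matrix.neg_mulVec, Matrix.mulVec_zero,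
      Matrix.mulVec_mulVec]
    abel
  have hD0 : D 0 = 0 := by
    simp only [hDdef, hE0, hK0, Matrix.one_mulVec, Matrix.mulVec_zero, hIdef,
      intervalIntegral.integral_same]
    abel
  -- exponential kills D
  have hEnegd : ∀ u : ℝ, HasDerivAt (fun v : ℝ => E (-v)) (A * E (-u)) u := by
    intro u
    have h2 := (hEd (-u)).scomp u (hasDerivAt_neg u)
    simp at h2
    exact h2
  have hPd : ∀ u, HasDerivAt (fun v => (E (-v)).mulVec (D v)) 0 u := by
    intro u
    have h3 := hasDerivAt_mulVec (hEnegd u) (hDd u)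
    convert h3 using 1
    rw [Matrix.mulVec_neg, Matrix.mulVec_mulVec, ← hcomm (-u)]
    abel
  have hDzero : ∀ u, D u = 0 := by
    intro u
    have hconst := is_const_of_deriv_eq_zero (f := fun v => (E (-v)).mulVec (D v))
      (fun v => (hPd v).differentiableAt) (fun v => (hPd v).deriv) u 0
    have h4 : (E (-u)).mulVec (D u) = 0 := by
      rw [hconst]; simp [hD0, Matrix.mulVec_zero]
    calc D u = (E u * E (-u)).mulVec (D u) := by
            rw [hEmul, add_neg_cancel, hE0, Matrix.one_mulVec]
      _ = (E u).mulVec ((E (-u)).mulVec (D u)) := by rw [Matrix.mulVec_mulVec]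
      _ = 0 := by rw [h4, Matrix.mulVec_zero]
  have hYZ : ∀ u, Y u = (E u).mulVec y + h u - (A * E u).mulVec (K u) := by
    intro u
    have hD := hDzero u
    simp only [hDdef] at hD
    rw [hY' u, ← sub_eq_zero]
    rw [show (y - I u + h u) - ((E u).mulVec y + h u - (A * E u).mulVec (K u))
        = y - I u - (E u).mulVec y + (A * E u).mulVec (K u) from by abel]
    exact hD
  -- assembly
  have hYint : IntervalIntegrable Y volume 0 t := hYc.intervalIntegrable _ _
  have hpull : I t = A.mulVec (∫ s in (0:ℝ)..t, Y s) := by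
    simp only [hIdef]
    have h5 := (mvB A).intervalIntegral_comp_comm hYint
    simpa using h5
  have hAY : A.mulVec (∫ s in (0:ℝ)..t, Y s) = y - Y t + h t := by
    rw [← hpull, hY' t]; abel
  have hintY : (∫ s in (0:ℝ)..t, Y s) = ε ^ 2 • γ⁻¹.mulVec (y - Y t + h t) := by
    have h6 : γ.mulVec (∫ s in (0:ℝ)..t, Y s) = ε ^ 2 • (y - Y t + h t) := by
      have h7 := hAY
      rw [hAdef, Matrix.smul_mulVec] at h7
      calc γ.mulVec (∫ s in (0:ℝ)..t, Y s)
          = ε ^ 2 • ((ε ^ 2)⁻¹ • γ.mulVec (∫ s in (0:ℝ)..t, Y s)) := by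
            rw [smul_smul, mul_inv_cancel₀ hε2, one_smul]
        _ = ε ^ 2 • (y - Y t + h t) := by rw [h7]
    calc (∫ s in (0:ℝ)..t, Y s) = (γ⁻¹ * γ).mulVec (∫ s in (0:ℝ)..t, Y s) := by
          rw [hγinv, Matrix.one_mulVec]
      _ = γ⁻¹.mulVec (γ.mulVec (∫ s in (0:ℝ)..t, Y s)) := by rw [Matrix.mulVec_mulVec]
      _ = γ⁻¹.mulVec (ε ^ 2 • (y - Y t + h t)) := by rw [h6]
      _ = ε ^ 2 • γ⁻¹.mulVec (y - Y t + h t) := by rw [Matrix.mulVec_smul]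
  have hsub : y - Y t + h t = (1 - E t).mulVec y + (A * E t).mulVec (K t) := by
    rw [hYZ t, Matrix.sub_mulVec, Matrix.one_mulVec]; abel
  -- the stochastic convolution
  have hEtr_c : Continuous fun r : ℝ => E (t - r) := hEc.comp (continuous_const.sub continuous_id)
  have hEtK : (E t).mulVec (K t) = ∫ r in (0:ℝ)..t, (E (t - r)).mulVec (h r) := by
    simp only [hKdef]
    have h8 := (mvB (E t)).intervalIntegral_comp_comm (hKintc.intervalIntegrable (μ := volume) 0 t)
    simp only [mvB_apply] at h8
    rw [← h8]
    refine intervalIntegral.integral_congr fun r _ => ?_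
    rw [Matrix.mulVec_mulVec, hEmul, ← sub_eq_add_neg]
  -- split h inside integral
  have hJc : Continuous fun r : ℝ => (E (t - r)).mulVec (G r) := hEtr_c.matrix_mulVec hGc
  have hSc : Continuous fun r : ℝ => (E (t - r)).mulVec (σm.mulVec (W r)) :=
    hEtr_c.matrix_mulVec hσWc
  have hsplit : (∫ r in (0:ℝ)..t, (E (t - r)).mulVec (h r))
      = -((1 / ε) • ∫ r in (0:ℝ)..t, (E (t - r)).mulVec (G r))
        + (1 / Real.sqrt ε) • ∫ r in (0:ℝ)..t, (E (t - r)).mulVec (σm.mulVec (W r)) := by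
    rw [← intervalIntegral.integral_smul, ← intervalIntegral.integral_smul,
      ← intervalIntegral.integral_neg, ← intervalIntegral.integral_add (f := fun r => -((1 / ε) • (E (t - r)).mulVec (G r)))
          (g := fun r => (1 / Real.sqrt ε) • (E (t - r)).mulVec (σm.mulVec (W r)))
        (((hJc.const_smul (1 / ε)).neg).intervalIntegrable 0 t)
        ((hSc.const_smul (1 / Real.sqrt ε)).intervalIntegrable 0 t)]
    refine intervalIntegral.integral_congr fun r _ => ?_
    simp only [hhdef, Matrix.mulVec_add, Matrix.mulVec_neg, Matrix.mulVec_smul]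
  -- IBP for the drift convolution
  set C : Matrix (Fin n) (Fin n) ℝ := ε ^ 2 • γ⁻¹ with hCdef
  have hCA : C * A = 1 := by
    rw [hCdef, hAdef, Matrix.smul_mul, Matrix.mul_smul, smul_smul, mul_inv_cancel₀ hε2,
      one_smul, hγinv]
  have hCc : Continuous fun r : ℝ => (C * E (t - r)).mulVec (gradV (X r)) :=
    (continuous_const.mul hEtr_c).matrix_mulVec hgc
  have hIBP : (∫ r in (0:ℝ)..t, (E (t - r)).mulVec (G r))
      = (∫ r in (0:ℝ)..t, (C * (1 - E (t - r))).mulVec (gradV (X r))) := by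
    have hFd : ∀ r : ℝ, HasDerivAt (fun v => (C * E (t - v)).mulVec (G v))
        ((E (t - r)).mulVec (G r) + (C * E (t - r)).mulVec (gradV (X r))) r := by
      intro r
      have hm : HasDerivAt (fun v : ℝ => E (t - v)) (A * E (t - r)) r := by
        have := (hEd (t - r)).scomp r ((hasDerivAt_id r).const_sub t)
        simp at this
        exact this
      have hm2 : HasDerivAt (fun v : ℝ => C * E (t - v)) (E (t - r)) r := by
        have h9 := hm.const_mul C
        rw [← mul_assoc, hCA, one_mul] at h9
        exact h9
      exact hasDerivAt_mulVec hm2 (hGd r)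
    have hFTC := intervalIntegral.integral_eq_sub_of_hasDerivAt
      (f := fun v => (C * E (t - v)).mulVec (G v)) (fun r _ => hFd r)
      ((hJc.add hCc).intervalIntegrable 0 t)
    have hCpull : C.mulVec (G t) = ∫ r in (0:ℝ)..t, C.mulVec (gradV (X r)) := by
      simp only [hGdef]
      have h10 := (mvB C).intervalIntegral_comp_comm
        (hgc.intervalIntegrable (μ := volume) 0 t)
      simpa using h10.symm
    have h11 : (∫ r in (0:ℝ)..t, ((E (t - r)).mulVec (G r) + (C * E (t - r)).mulVec (gradV (X r))))
        = C.mulVec (G t) := by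
      rw [hFTC]
      simp [hG0, Matrix.mulVec_zero, sub_self, hE0, mul_one]
    rw [intervalIntegral.integral_add (hJc.intervalIntegrable 0 t) (hCc.intervalIntegrable 0 t)]
      at h11
    have h12 : (∫ r in (0:ℝ)..t, (E (t - r)).mulVec (G r))
        = (∫ r in (0:ℝ)..t, C.mulVec (gradV (X r)))
          - ∫ r in (0:ℝ)..t, (C * E (t - r)).mulVec (gradV (X r)) := by
      rw [← hCpull, ← h11]; abel
    rw [h12, ← intervalIntegral.integral_sub ((continuous_const.matrix_mulVec hgc).intervalIntegrable 0 t)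
      (hCc.intervalIntegrable 0 t)]
    refine intervalIntegral.integral_congr fun r _ => ?_
    rw [mul_sub, mul_one, Matrix.sub_mulVec]
  -- convert C-form to γ⁻¹-form
  have hCform : (∫ r in (0:ℝ)..t, (C * (1 - E (t - r))).mulVec (gradV (X r)))
      = ε ^ 2 • ∫ r in (0:ℝ)..t, (γ⁻¹ * (1 - E (t - r))).mulVec (gradV (X r)) := by
    rw [← intervalIntegral.integral_smul]
    refine intervalIntegral.integral_congr fun r _ => ?_
    rw [hCdef, Matrix.smul_mul, Matrix.smul_mulVec]
  have hSform : (∫ r in (0:ℝ)..t, (1 / ε ^ 2) • (E (t - r) * σm).mulVec (W r))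
      = (1 / ε ^ 2) • ∫ r in (0:ℝ)..t, (E (t - r)).mulVec (σm.mulVec (W r)) := by
    rw [← intervalIntegral.integral_smul]
    refine intervalIntegral.integral_congr fun r _ => ?_
    rw [Matrix.mulVec_mulVec]
  -- final computation
  have hS : (∫ r in (0:ℝ)..t, (E (t - r)).mulVec (σm.mulVec (W r)))
      = ε ^ 2 • ∫ r in (0:ℝ)..t, (1 / ε ^ 2) • (E (t - r) * σm).mulVec (W r) := by
    rw [hSform, smul_smul, show ε ^ 2 * (1 / ε ^ 2) = 1 from by field_simp, one_smul]
  set Jd : Fin n → ℝ := ∫ r in (0:ℝ)..t, (γ⁻¹ * (1 - E (t - r))).mulVec (gradV (X r)) with hJdef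
  set Sd : Fin n → ℝ := ∫ r in (0:ℝ)..t, (1 / ε ^ 2) • (E (t - r) * σm).mulVec (W r) with hSdef
  have hKfin : (E t).mulVec (K t) = -((1 / ε) • (ε ^ 2 • Jd)) + (1 / Real.sqrt ε) • (ε ^ 2 • Sd) := by
    rw [hEtK, hsplit, hIBP, hCform, hS]
  rw [hX t, hintY, hsub, Matrix.mulVec_add, Matrix.mulVec_mulVec, Matrix.mulVec_mulVec,
    show γ⁻¹ * (A * E t) = (ε ^ 2)⁻¹ • E t from by
      rw [hAdef, ← mul_assoc, Matrix.mul_smul, hγinv, Matrix.smul_mul, one_mul],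
    Matrix.smul_mulVec, hKfin]
  have hgoal : x + (1 / ε) • (ε ^ 2 •
      ((γ⁻¹ * (1 - E t)).mulVec y
        + (ε ^ 2)⁻¹ • (-((1 / ε) • ε ^ 2 • Jd) + (1 / Real.sqrt ε) • ε ^ 2 • Sd)))
      = x + ε • (γ⁻¹ * (1 - E t)).mulVec y - Jd + Real.sqrt ε • Sd := by
    match_scalars
    all_goals field_simp
    all_goals nlinarith [hss, hε]
  rw [hgoal]
end
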